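/- arXiv:1809.08577 — 2 statements merged into one kernel-verified Lean document; each statement's English description precedes it below -/
import Mathlib

section
/- Let $m \geq n \geq 0$ be integers. For $1 \leq t \leq n+1$ define $a_t := [m+t][m+t-1]\cdots[m+t-n+1]$, a product of $n$ consecutive quantum integers, where $[l] = (q^l - q^{-l})/(q - q^{-1}) \in \mathbb{Z}[q,q^{-1}]$. Then the greatest common divisor in $\mathbb{Z}[q,q^{-1}]$ (up to units) of $a_1, a_2, \ldots, a_{n+1}$ equals $[n]! = [1][2]\cdots[n]$. -/
noncomputable section

open Finset LaurentPolynomial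

/-- The balanced quantum integer `[l] = q^{l-1} + q^{l-3} + ⋯ + q^{1-l}`
(equal to `(q^l - q^{-l})/(q - q^{-1})`) in the Laurent polynomial ring `ℤ[q,q⁻¹]`. -/
def qInt (l : ℕ) : LaurentPolynomial ℤ :=
  ∑ k ∈ Finset.range l, T ((l : ℤ) - 1 - 2 * k)

/-- The quantum factorial `[n]! = [1][2]⋯[n]`. -/
def qFact (n : ℕ) : LaurentPolynomial ℤ :=
  ∏ l ∈ Finset.range n, qInt (l + 1)

lemma qInt_zero : qInt 0 = 0 := by simp [qInt]

lemma qInt_add (a b : ℕ) :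
    qInt (a + b) = T (b : ℤ) * qInt a + T (-(a : ℤ)) * qInt b := by
  unfold qInt
  rw [Finset.sum_range_add, Finset.mul_sum, Finset.mul_sum]
  congr 1
  · refine Finset.sum_congr rfl fun k _ => ?_
    rw [← T_add]
    congr 1
    push_cast
    ring
  · refine Finset.sum_congr rfl fun k _ => ?_
    rw [← T_add]
    congr 1
    push_cast
    ring

lemma qInt_sub (a b : ℕ) (h : b ≤ a) :
    qInt (a - b) = T (-(b : ℤ)) * qInt a - T (-(a : ℤ)) * qInt b := by
  have h1 := qInt_add (a - b) b
  rw [Nat.sub_add_cancel h] at h1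
  have hc : ((a - b : ℕ) : ℤ) = (a : ℤ) - b := by omega
  rw [hc] at h1
  rw [h1, mul_add, ← mul_assoc, ← mul_assoc, ← T_add, ← T_add]
  have e1 : -(b : ℤ) + b = 0 := by ring
  have e2 : -(b : ℤ) + -((a : ℤ) - b) = -(a : ℤ) := by ring
  rw [e1, e2, T_zero, one_mul]
  ring

/-- The product of `n` consecutive quantum integers `[N][N-1]⋯[N-n+1]`. -/
def qProd (N n : ℕ) : LaurentPolynomial ℤ :=
  ∏ k ∈ Finset.range n, qInt (N - k)

lemma qProd_succ (N n : ℕ) : qProd N (n + 1) = qProd N n * qInt (N - n) :=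
  Finset.prod_range_succ _ _

lemma qProd_succ' (N n : ℕ) : qProd (N + 1) (n + 1) = qInt (N + 1) * qProd N n := by
  rw [qProd, Finset.prod_range_succ']
  simp only [Nat.succ_sub_succ_eq_sub, Nat.sub_zero]
  rw [mul_comm]
  rfl

lemma qFact_succ (n : ℕ) : qFact (n + 1) = qFact n * qInt (n + 1) :=
  Finset.prod_range_succ _ _

lemma qProd_eq_zero (N n : ℕ) (h : N < n) : qProd N n = 0 := by
  rw [qProd]
  apply Finset.prod_eq_zero (Finset.mem_range.mpr h)
  simp [qInt_zero]

lemma qFact_dvd_qProd : ∀ N n, qFact n ∣ qProd N n := by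
  intro N
  induction N with
  | zero =>
      intro n
      match n with
      | 0 => simp [qProd, qFact]
      | k + 1 => rw [qProd_eq_zero 0 (k + 1) (by omega)]; exact dvd_zero _
  | succ N ih =>
      intro n
      match n with
      | 0 => simp [qFact]
      | k + 1 =>
        by_cases hk : k ≤ N
        · have e := qInt_add (N - k) (k + 1)
          rw [show N - k + (k + 1) = N + 1 by omega] at e
          rw [qProd_succ', e, add_mul, mul_assoc, mul_assoc]
          apply dvd_add
          · apply Dvd.dvd.mul_left
            have : qInt (N - k) * qProd N k = qProd N (k + 1) := by
              rw [qProd_succ, mul_comm]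
            rw [this]
            exact ih (k + 1)
          · apply Dvd.dvd.mul_left
            rw [qFact_succ, mul_comm (qFact k)]
            exact mul_dvd_mul_left _ (ih k)
        · rw [qProd_eq_zero (N + 1) (k + 1) (by omega)]
          exact dvd_zero _

lemma key_combination (m n t : ℕ) (hn : n ≤ m) :
    qInt (n + 1) * qProd (m + t) n =
      T (-((m + t - n : ℕ) : ℤ)) * qProd (m + t + 1) (n + 1) -
        T (-((m + t + 1 : ℕ) : ℤ)) * qProd (m + t) (n + 1) := by
  have hb : m + t - n ≤ m + t + 1 := by omega
  have e := qInt_sub (m + t + 1) (m + t - n) hb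
  rw [show m + t + 1 - (m + t - n) = n + 1 by omega] at e
  rw [e, sub_mul, mul_assoc, mul_assoc, qProd_succ', ← qProd_succ']
  congr 2
  rw [qProd_succ, mul_comm]

lemma key_dvd (m : ℕ) : ∀ n, n ≤ m → ∀ c d : LaurentPolynomial ℤ,
    (∀ t ∈ Finset.Icc 1 (n + 1), c ∣ d * qProd (m + t) n) → c ∣ d * qFact n := by
  intro n
  induction n with
  | zero =>
      intro _ c d h
      have := h 1 (by simp)
      simpa [qProd, qFact] using this
  | succ n ih =>
      intro hnm c d h
      have hstep : ∀ t ∈ Finset.Icc 1 (n + 1),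
          c ∣ (d * qInt (n + 1)) * qProd (m + t) n := by
        intro t ht
        simp only [Finset.mem_Icc] at ht
        have h1 : c ∣ d * qProd (m + t + 1) (n + 1) := by
          have := h (t + 1) (by simp only [Finset.mem_Icc]; omega)
          simpa [show m + (t + 1) = m + t + 1 by omega] using this
        have h2 : c ∣ d * qProd (m + t) (n + 1) :=
          h t (by simp only [Finset.mem_Icc]; omega)
        have := dvd_sub (h1.mul_left (T (-((m + t - n : ℕ) : ℤ))))
          (h2.mul_left (T (-((m + t + 1 : ℕ) : ℤ))))
        have eq1 : (d * qInt (n + 1)) * qProd (m + t) n =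
            T (-((m + t - n : ℕ) : ℤ)) * (d * qProd (m + t + 1) (n + 1)) -
              T (-((m + t + 1 : ℕ) : ℤ)) * (d * qProd (m + t) (n + 1)) := by
          have := key_combination m n t (by omega)
          calc (d * qInt (n + 1)) * qProd (m + t) n
              = d * (qInt (n + 1) * qProd (m + t) n) := by ring
            _ = d * (T (-((m + t - n : ℕ) : ℤ)) * qProd (m + t + 1) (n + 1) -
                  T (-((m + t + 1 : ℕ) : ℤ)) * qProd (m + t) (n + 1)) := by rw [this]
            _ = _ := by ring
        rw [eq1]
        exact this
      have := ih (by omega) c (d * qInt (n + 1)) hstep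
      rw [qFact_succ]
      calc c ∣ d * qInt (n + 1) * qFact n := this
        _ = d * (qFact n * qInt (n + 1)) := by ring

/-- For `m ≥ n ≥ 0` and `1 ≤ t ≤ n+1`, the products
`a_t = [m+t][m+t-1]⋯[m+t-n+1]` of `n` consecutive quantum integers have
greatest common divisor (up to units) equal to `[n]!` in `ℤ[q,q⁻¹]`. -/
theorem gcd_consecutive_qInt_products (m n : ℕ) (hmn : n ≤ m) :
    (∀ t ∈ Finset.Icc 1 (n + 1),
        qFact n ∣ ∏ k ∈ Finset.range n, qInt (m + t - k)) ∧
    (∀ c : LaurentPolynomial ℤ,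
        (∀ t ∈ Finset.Icc 1 (n + 1), c ∣ ∏ k ∈ Finset.range n, qInt (m + t - k)) →
        c ∣ qFact n) := by
  constructor
  · intro t _
    exact qFact_dvd_qProd (m + t) n
  · intro c h
    have := key_dvd m n hmn c 1 (fun t ht => by
      simpa [qProd] using (h t ht).mul_left 1)
    simpa using this
end
end

section
/- Let $W$ be a finite Coxeter group with longest element $w_0$, $\mathcal{H}$ its unequal-parameter Hecke algebra, and define the bilinear form $\langle H \mid H' \rangle := d(H')(H)$ on $\mathcal{H}$, where $d(H) = H\cdot h_{w_0}$. Then this bilinear form is symmetric, and satisfies $\langle H' \mid H H'' \rangle = \langle H^\flat H' \mid H'' \rangle$. -/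
set_option synthInstance.maxHeartbeats 1000000
set_option maxHeartbeats 1000000

noncomputable section

open Finset LaurentPolynomial CoxeterSystem

/-- The ring `𝒜_ℤ = ℤ[p^{±1}, q^{±1}]`. -/
abbrev AZ : Type := LaurentPolynomial (LaurentPolynomial ℤ)

/-- The bilinear form `⟨a ∣ b⟩ := d(b)(a) = h_{w₀}(b^♭ a)` on the Hecke algebra. -/
def heckeForm {W H : Type} [Ring H] [Algebra AZ H] (TH : Module.Basis W AZ H)
    (flat : H →ₗ[AZ] H) (w₀ : W) (a b : H) : AZ :=
  TH.repr (flat b * a) w₀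

namespace CoxLongest

open CoxeterSystem

variable {B W : Type} [Group W] {M : CoxeterMatrix B} (cs : CoxeterSystem M W)

local prefix:100 "s" => cs.simple
local prefix:100 "π" => cs.wordProd
local prefix:100 "ℓ" => cs.length

private lemma zmod2_add_self (x : ZMod 2) : x + x = 0 := by revert x; decide

open Classical in
/-- The sign permutation attached to a simple generator. -/
private def refPerm (i : B) : Equiv.Perm (W × ZMod 2) :=
  Function.Involutive.toPerm
    (fun p => (s i * p.1 * s i, p.2 + if p.1 = s i then 1 else 0))
    (by
      intro ⟨t, e⟩
      have hs := cs.simple_mul_simple_self i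
      have h1 : s i * (s i * t * s i) * s i = t := by
        calc s i * (s i * t * s i) * s i = (s i * s i) * t * (s i * s i) := by group
        _ = t := by rw [hs]; group
      have h2 : (s i * t * s i = s i) ↔ (t = s i) := by
        constructor
        · intro h
          have h3 := congrArg (fun u => s i * u * s i) h
          rw [h1] at h3
          rw [h3]
          calc s i * s i * s i = (s i * s i) * s i := by group
          _ = s i := by rw [hs]; group
        · intro h; rw [h]
          calc s i * s i * s i = s i * (s i * s i) := by group
          _ = s i := by rw [hs]; group
      refine Prod.ext ?_ ?_
      · exact h1
      · simp only [h2]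
        by_cases h : t = s i <;> simp [h, add_assoc, zmod2_add_self])

open Classical in
private lemma refPerm_apply (i : B) (t : W) (e : ZMod 2) :
    refPerm cs i (t, e) = (s i * t * s i, e + if t = s i then 1 else 0) := by
  rfl

private lemma sum_range_add' {A : Type} [AddCommMonoid A] (f : ℕ → A) (m n : ℕ) :
    ∑ r ∈ Finset.range (m + n), f r =
      (∑ r ∈ Finset.range m, f r) + ∑ r ∈ Finset.range n, f (m + r) := by
  induction n with
  | zero => simp
  | succ n ih =>
      rw [← Nat.add_assoc, Finset.sum_range_succ, ih, Finset.sum_range_succ, add_assoc]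

open Classical in
private lemma refPerm_pow (i j : B) (k : ℕ) (t : W) (e : ZMod 2) :
    ((refPerm cs i * refPerm cs j) ^ k) (t, e) =
      ((s i * s j) ^ k * t * ((s i * s j) ^ k)⁻¹,
        e + ∑ r ∈ Finset.range (2 * k),
          if t = s j * (s i * s j) ^ r then 1 else 0) := by
  induction k generalizing t e with
  | zero => simp
  | succ k ih =>
      have hxinv : (s i * s j)⁻¹ * s j = s j * (s i * s j) := by
        rw [mul_inv_rev, cs.inv_simple, cs.inv_simple]
        group
      have hsj := cs.simple_mul_simple_self j
      rw [pow_succ, Equiv.Perm.mul_apply, Equiv.Perm.mul_apply,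
        refPerm_apply, refPerm_apply, ih]
      have ht' : s i * (s j * t * s j) * s i =
          (s i * s j) * t * (s i * s j)⁻¹ := by
        rw [mul_inv_rev, cs.inv_simple, cs.inv_simple]; group
      have hc1 : (s j * t * s j = s i) ↔ (t = s j * (s i * s j) ^ 1) := by
        rw [pow_one]
        constructor
        · intro h
          have h3 : s j * (s j * t * s j) * s j = s j * s i * s j := by rw [h]
          have h2 : s j * (s j * t * s j) * s j = t := by
            calc s j * (s j * t * s j) * s j = (s j * s j) * t * (s j * s j) := by group
            _ = t := by rw [hsj]; group
          rw [h2] at h3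
          rw [h3]; group
        · intro h
          rw [h]
          calc s j * (s j * (s i * s j)) * s j = (s j * s j) * s i * (s j * s j) := by group
          _ = s i := by rw [hsj]; group
      have hc2 : ∀ r : ℕ, ((s i * s j) * t * (s i * s j)⁻¹ = s j * (s i * s j) ^ r) ↔
          (t = s j * (s i * s j) ^ (r + 2)) := by
        intro r
        have hp : (s i * s j) ^ (r + 2) =
            (s i * s j) * (s i * s j) ^ r * (s i * s j) := by
          rw [show r + 2 = 1 + r + 1 by ring, pow_add, pow_add, pow_one]
        have key : (s i * s j)⁻¹ * (s j * (s i * s j) ^ r) * (s i * s j) =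
            s j * (s i * s j) ^ (r + 2) := by
          rw [hp]
          calc (s i * s j)⁻¹ * (s j * (s i * s j) ^ r) * (s i * s j)
              = ((s i * s j)⁻¹ * s j) * ((s i * s j) ^ r * (s i * s j)) := by group
          _ = (s j * (s i * s j)) * ((s i * s j) ^ r * (s i * s j)) := by rw [hxinv]
          _ = s j * ((s i * s j) * (s i * s j) ^ r * (s i * s j)) := by
              simp only [mul_assoc]
        constructor
        · intro h
          have h3 : (s i * s j)⁻¹ * ((s i * s j) * t * (s i * s j)⁻¹) * (s i * s j) =
              (s i * s j)⁻¹ * (s j * (s i * s j) ^ r) * (s i * s j) := by rw [h]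
          rw [key] at h3
          rw [← h3]; group
        · intro h
          rw [← key] at h
          rw [h]; group
      rw [ht']
      refine Prod.ext ?_ ?_
      · show (s i * s j) ^ k * ((s i * s j) * t * (s i * s j)⁻¹) * ((s i * s j) ^ k)⁻¹ =
          (s i * s j) ^ (k + 1) * t * ((s i * s j) ^ (k + 1))⁻¹
        rw [pow_succ, mul_inv_rev]
        group
      · show e + (if t = s j then 1 else 0) + (if s j * t * s j = s i then 1 else 0) +
            (∑ r ∈ Finset.range (2 * k),
              if (s i * s j) * t * (s i * s j)⁻¹ = s j * (s i * s j) ^ r then 1 else 0) =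
          e + ∑ r ∈ Finset.range (2 * (k + 1)), if t = s j * (s i * s j) ^ r then 1 else 0
        simp only [hc1, hc2]
        have h2k : 2 * (k + 1) = (2 * k + 1) + 1 := by ring
        rw [h2k, Finset.sum_range_succ', Finset.sum_range_succ']
        simp only [show ∀ r : ℕ, r + 1 + 1 = r + 2 from fun r => by ring, pow_zero, mul_one]
        ring

private lemma refPerm_liftable : M.IsLiftable (refPerm cs) := by
  intro i j
  refine Equiv.ext fun p => ?_
  obtain ⟨t, e⟩ := p
  rw [refPerm_pow, cs.simple_mul_simple_pow i j]
  classical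
  have hper : ∀ r : ℕ, (if t = s j * (s i * s j) ^ (M i j + r) then (1 : ZMod 2) else 0) =
      (if t = s j * (s i * s j) ^ r then (1 : ZMod 2) else 0) := by
    intro r
    simp only [pow_add, cs.simple_mul_simple_pow i j, one_mul]
  have hz : ∑ r ∈ Finset.range (2 * M.M i j),
      (if t = s j * (s i * s j) ^ r then (1 : ZMod 2) else 0) = 0 := by
    rw [two_mul, sum_range_add']
    simp only [hper]
    rw [← Finset.sum_add_distrib]
    exact Finset.sum_eq_zero fun r _ => zmod2_add_self _
  rw [hz]
  simp

/-- The sign homomorphism. -/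
private def mu : W →* Equiv.Perm (W × ZMod 2) :=
  cs.lift ⟨refPerm cs, refPerm_liftable cs⟩

open Classical in
/-- Mod 2 count of `t` in a list. -/
private def cnt (l : List W) (t : W) : ZMod 2 :=
  (l.map (fun u => if t = u then (1 : ZMod 2) else 0)).sum

private lemma mem_of_cnt_ne_zero {l : List W} {t : W} (h : cnt l t ≠ 0) : t ∈ l := by
  classical
  induction l with
  | nil => simp [cnt] at h
  | cons a l ih =>
      by_cases hta : t = a
      · simp [hta]
      · simp only [cnt, List.map_cons, List.sum_cons, if_neg hta, zero_add] at h
        exact List.mem_cons_of_mem _ (ih h)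

open Classical in
private lemma mu_word (ω : List B) (t : W) (e : ZMod 2) :
    mu cs (π ω) (t, e) = (π ω * t * (π ω)⁻¹, e + cnt (cs.rightInvSeq ω) t) := by
  induction ω generalizing t e with
  | nil => simp [cnt]
  | cons i ω ih =>
      rw [cs.wordProd_cons, map_mul, Equiv.Perm.mul_apply, ih]
      have hmus : mu cs (s i) = refPerm cs i := cs.lift_apply_simple (refPerm_liftable cs) i
      rw [hmus, refPerm_apply]
      have hris : cs.rightInvSeq (i :: ω) = ((π ω)⁻¹ * s i * (π ω)) :: cs.rightInvSeq ω := rfl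
      have hcond : (π ω * t * (π ω)⁻¹ = s i) ↔ (t = (π ω)⁻¹ * s i * (π ω)) := by
        constructor
        · intro h; rw [← h]; group
        · intro h; rw [h]; group
      refine Prod.ext ?_ ?_
      · show s i * (π ω * t * (π ω)⁻¹) * s i = (s i * π ω) * t * (s i * π ω)⁻¹
        rw [mul_inv_rev, cs.inv_simple]; group
      · show e + cnt (cs.rightInvSeq ω) t + (if π ω * t * (π ω)⁻¹ = s i then 1 else 0) =
          e + cnt (cs.rightInvSeq (i :: ω)) t
        rw [hris]
        simp only [cnt, List.map_cons, List.sum_cons, hcond]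
        ring

/-- The sign cocycle. -/
private def eta (w t : W) : ZMod 2 := (mu cs w (t, 0)).2

private lemma mu_apply (w t : W) (e : ZMod 2) :
    mu cs w (t, e) = (w * t * w⁻¹, e + eta cs w t) := by
  obtain ⟨ω, rfl⟩ := cs.wordProd_surjective w
  rw [mu_word, eta, mu_word, zero_add]

private lemma eta_mul (u v t : W) :
    eta cs (u * v) t = eta cs v t + eta cs u (v * t * v⁻¹) := by
  have h : mu cs (u * v) (t, 0) = mu cs u (mu cs v (t, 0)) := by
    rw [map_mul, Equiv.Perm.mul_apply]
  rw [mu_apply, mu_apply, mu_apply] at h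
  have h2 := congrArg Prod.snd h
  simp only [zero_add] at h2
  exact h2

open Classical in
private lemma eta_simple (i : B) (t : W) :
    eta cs (s i) t = if t = s i then 1 else 0 := by
  have hmus : mu cs (s i) = refPerm cs i := cs.lift_apply_simple (refPerm_liftable cs) i
  rw [eta, hmus, refPerm_apply, zero_add]

private lemma eta_reflection_self {t : W} (ht : cs.IsReflection t) : eta cs t t = 1 := by
  obtain ⟨w, i, rfl⟩ := ht
  obtain ⟨ω, rfl⟩ := cs.wordProd_surjective w
  classical
  induction ω with
  | nil => simp [eta_simple]
  | cons j ω ih =>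
      rw [cs.wordProd_cons]
      set t := π ω * s i * (π ω)⁻¹ with hht
      have hsj := cs.simple_mul_simple_self j
      have ht' : (s j * π ω) * s i * (s j * π ω)⁻¹ = s j * t * s j := by
        rw [mul_inv_rev, cs.inv_simple, hht]; group
      rw [ht']
      have key1 : (t * s j) * (s j * t * s j) * (t * s j)⁻¹ = t := by
        rw [mul_inv_rev, cs.inv_simple]
        calc t * s j * (s j * t * s j) * (s j * t⁻¹)
            = t * (s j * s j) * t * (s j * s j) * t⁻¹ := by group
        _ = t := by rw [hsj]; group
      have key2 : s j * (s j * t * s j) * (s j)⁻¹ = t := by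
        calc s j * (s j * t * s j) * (s j)⁻¹ = (s j * s j) * t * (s j * (s j)⁻¹) := by group
        _ = t := by rw [hsj]; group
      have step1 : eta cs (s j * t * s j) (s j * t * s j) =
          eta cs (t * s j) (s j * t * s j) + eta cs (s j) t := by
        have h := eta_mul cs (s j) (t * s j) (s j * t * s j)
        rw [show s j * (t * s j) = s j * t * s j by group, key1] at h
        exact h
      have step2 : eta cs (t * s j) (s j * t * s j) =
          eta cs (s j) (s j * t * s j) + eta cs t t := by
        have h := eta_mul cs t (s j) (s j * t * s j)
        rw [key2] at h
        exact h
      have hcond : (s j * t * s j = s j) ↔ (t = s j) := by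
        constructor
        · intro h
          have h3 : s j * (s j * t * s j) * s j = s j * s j * s j := by rw [h]
          have h2 : s j * (s j * t * s j) * s j = t := by
            calc s j * (s j * t * s j) * s j = (s j * s j) * t * (s j * s j) := by group
            _ = t := by rw [hsj]; group
          rw [h2] at h3
          rw [h3]
          calc s j * s j * s j = (s j * s j) * s j := by group
          _ = s j := by rw [hsj]; group
        · intro h
          rw [h]
          calc s j * s j * s j = s j * (s j * s j) := by group
          _ = s j := by rw [hsj]; group
      rw [step1, step2, ih, eta_simple, eta_simple]
      simp only [hcond]
      by_cases h : t = s j <;> simp [h] <;> decide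

private lemma length_lt_of_eta {w t : W} (h : eta cs w t = 1) : ℓ (w * t) < ℓ w := by
  obtain ⟨ω, hlen, rfl⟩ := cs.exists_reduced_word w
  have hred : cs.IsReduced ω := hlen
  have hcnt : eta cs (π ω) t = cnt (cs.rightInvSeq ω) t := by
    rw [eta, mu_word, zero_add]
  rw [hcnt] at h
  have hmem : t ∈ cs.rightInvSeq ω := mem_of_cnt_ne_zero (by rw [h]; decide)
  exact (cs.isRightInversion_of_mem_rightInvSeq hred hmem).2

private lemma eta_of_length_lt {w t : W} (ht : cs.IsReflection t)
    (h : ℓ (w * t) < ℓ w) : eta cs w t = 1 := by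
  by_contra hne
  have h0 : eta cs w t = 0 := by
    have : ∀ x : ZMod 2, x = 0 ∨ x = 1 := by decide
    rcases this (eta cs w t) with h' | h'
    · exact h'
    · exact absurd h' hne
  have hwt : eta cs (w * t) t = 1 := by
    rw [eta_mul, eta_reflection_self cs ht]
    rw [show t * t * t⁻¹ = t by group, h0]
    decide
  have := length_lt_of_eta cs hwt
  rw [mul_assoc, ht.mul_self, mul_one] at this
  omega

/-- Uniqueness consequence: the longest element is an involution. -/
lemma longest_inv_eq {w₀ : W} (hw₀ : ∀ w, ℓ w ≤ ℓ w₀) : w₀⁻¹ = w₀ := by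
  by_contra hne
  have hz : w₀⁻¹ * w₀⁻¹ ≠ 1 := by
    intro h
    have h2 := inv_eq_of_mul_eq_one_right h
    rw [inv_inv] at h2
    exact hne h2.symm
  obtain ⟨i, hi⟩ := cs.exists_rightDescent_of_ne_one hz
  set z := w₀⁻¹ * w₀⁻¹ with hzdef
  have h1 : eta cs z (s i) = 1 := eta_of_length_lt cs (cs.isReflection_simple i) hi
  have hr : cs.IsReflection (z * s i * z⁻¹) := (cs.isReflection_simple i).conj z
  have h2 : eta cs w₀ (z * s i * z⁻¹) = 1 := by
    refine eta_of_length_lt cs hr (lt_of_le_of_ne (hw₀ _) (hr.length_mul_left_ne w₀))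
  have h3 : eta cs w₀⁻¹ (s i) = 1 := by
    refine eta_of_length_lt cs (cs.isReflection_simple i) ?_
    refine lt_of_le_of_ne ?_ ((cs.isReflection_simple i).length_mul_left_ne w₀⁻¹)
    rw [cs.length_inv]
    exact hw₀ _
  have h4 : w₀ * z = w₀⁻¹ := by rw [hzdef]; group
  have h5 := eta_mul cs w₀ z (s i)
  rw [h4, h1, h2, h3] at h5
  exact absurd h5 (by decide)

end CoxLongest

/-- The form `⟨H ∣ H'⟩ = d(H')(H)` is symmetric and satisfies
`⟨H' ∣ H H''⟩ = ⟨H^♭ H' ∣ H''⟩`. -/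
theorem heckeForm_symm_and_adjoint
    {B : Type} (M : CoxeterMatrix B) (W : Type) [Group W] [Fintype W]
    (cs : CoxeterSystem M W)
    (qp : B → AZˣ)
    (H : Type) [Ring H] [Algebra AZ H] (TH : Module.Basis W AZ H)
    (hone : TH 1 = 1)
    (hmulL : ∀ (i : B) (w : W),
      TH (cs.simple i) * TH w =
        if cs.length w < cs.length (cs.simple i * w) then TH (cs.simple i * w)
        else TH (cs.simple i * w) + ((((qp i)⁻¹ : AZˣ) : AZ) - ((qp i : AZˣ) : AZ)) • TH w)
    -- the anti-automorphism ♭ with H_w^♭ = H_{w⁻¹}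
    (flat : H →ₗ[AZ] H)
    (hflatmul : ∀ x y : H, flat (x * y) = flat y * flat x)
    (hflatT : ∀ w : W, flat (TH w) = TH w⁻¹)
    -- the longest element
    (w₀ : W) (hw₀ : ∀ w : W, cs.length w ≤ cs.length w₀) :
    (∀ a b : H, heckeForm TH flat w₀ a b = heckeForm TH flat w₀ b a) ∧
    (∀ x y z : H, heckeForm TH flat w₀ y (x * z) =
      heckeForm TH flat w₀ (flat x * y) z) := by
  classical
  have hinv : w₀⁻¹ = w₀ := CoxLongest.longest_inv_eq cs hw₀
  have hflatflat : ∀ h : H, flat (flat h) = h := by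
    have hcomp : flat.comp flat = LinearMap.id := by
      refine Module.Basis.ext TH fun w => ?_
      simp [hflatT]
    intro h
    simpa using LinearMap.congr_fun hcomp h
  have key : ∀ h : H, TH.repr (flat h) w₀ = TH.repr h w₀ := by
    have h1 : ((Finsupp.lapply w₀ : (W →₀ AZ) →ₗ[AZ] AZ).comp
        (TH.repr.toLinearMap.comp flat)) =
        ((Finsupp.lapply w₀ : (W →₀ AZ) →ₗ[AZ] AZ).comp TH.repr.toLinearMap) := by
      refine Module.Basis.ext TH fun w => ?_
      simp only [LinearMap.comp_apply, LinearEquiv.coe_toLinearMap, Finsupp.lapply_apply]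
      rw [hflatT, TH.repr_self, TH.repr_self, Finsupp.single_apply, Finsupp.single_apply]
      by_cases h : w = w₀
      · subst h
        rw [if_pos rfl, if_pos hinv]
      · rw [if_neg h, if_neg (fun hc => h (by rw [← inv_inv w, hc, hinv]))]
    intro h
    simpa using LinearMap.congr_fun h1 h
  constructor
  · intro a b
    unfold heckeForm
    have hh : flat b * a = flat (flat a * b) := by
      rw [hflatmul, hflatflat]
    rw [hh, key]
  · intro x y z
    unfold heckeForm
    rw [hflatmul, mul_assoc]
end
end
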